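/- Let f be a rank function on a finite set E, and let S_0 be a nonempty subset of E attaining m = min_{S ⊆ E, S ≠ ∅} f(S)/|S|. Define h(S) = f(S ∪ S_0) − f(S_0) for S ⊆ E − S_0. Then: (i) for every nonempty S ⊆ E − S_0, h(S)/|S| ≥ m; and (ii) if moreover S_0 is a maximal minimizer, i.e., f(S ∪ S_0)/(|S| + |S_0|) > m for every nonempty S ⊆ E − S_0, then h(S)/|S| > m for every nonempty S ⊆ E − S_0, so that min_{S ⊆ E − S_0, S ≠ ∅} h(S)/|S| > m whenever E − S_0 is nonempty. -/
import Mathlib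


open Finset

/-- A rank function on the finite ground set: normalized, increasing and submodular. -/
def IsRankFunction {α : Type*} [DecidableEq α] (f : Finset α → ℝ) : Prop :=
  f ∅ = 0 ∧ (∀ S T : Finset α, S ⊆ T → f S ≤ f T) ∧
    (∀ S T : Finset α, f (S ∩ T) + f (S ∪ T) ≤ f S + f T)

/-- let `f` be a rank function on a finite set `E` and let `S₀ ≠ ∅`
attain `m = min_{∅ ≠ S ⊆ E} f(S)/|S|`.  With `h(S) = f(S ∪ S₀) − f(S₀)` on
`E − S₀`: (i) `h(S)/|S| ≥ m` for every nonempty `S ⊆ E − S₀`; and (ii) if `S₀` is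
a maximal minimizer (`f(S ∪ S₀)/(|S| + |S₀|) > m` for every nonempty
`S ⊆ E − S₀`), then `h(S)/|S| > m` for every nonempty `S ⊆ E − S₀`. -/
theorem stmt10 {α : Type*} [DecidableEq α] [Fintype α] (f : Finset α → ℝ)
    (hf : IsRankFunction f) (S₀ : Finset α) (hS₀ : S₀.Nonempty) (m : ℝ)
    (hm : m = f S₀ / S₀.card)
    (hmin : ∀ S : Finset α, S.Nonempty → m ≤ f S / S.card) :
    (∀ S : Finset α, S.Nonempty → S ⊆ S₀ᶜ →
      m ≤ (f (S ∪ S₀) - f S₀) / S.card) ∧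
    ((∀ S : Finset α, S.Nonempty → S ⊆ S₀ᶜ →
        m < f (S ∪ S₀) / (S.card + S₀.card)) →
      ∀ S : Finset α, S.Nonempty → S ⊆ S₀ᶜ →
        m < (f (S ∪ S₀) - f S₀) / S.card) := by

  have hc0 : (0:ℝ) < S₀.card := by exact_mod_cast Finset.card_pos.mpr hS₀
  have hfS₀ : f S₀ = m * S₀.card := by
    rw [hm]; field_simp
  have key : ∀ S : Finset α, S.Nonempty → S ⊆ S₀ᶜ →
      (S ∪ S₀).card = S.card + S₀.card := by
    intro S hS hsub
    exact Finset.card_union_of_disjoint (Finset.disjoint_left.mpr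
      (fun a ha => by simpa using hsub ha))
  constructor
  · intro S hS hsub
    have hc : (0:ℝ) < S.card := by exact_mod_cast Finset.card_pos.mpr hS
    have h1 := hmin (S ∪ S₀) (hS.mono Finset.subset_union_left)
    rw [key S hS hsub] at h1
    push_cast at h1
    have hpos : (0:ℝ) < (S.card : ℝ) + S₀.card := by linarith
    rw [le_div_iff₀ hpos] at h1
    rw [le_div_iff₀ hc, hfS₀]
    nlinarith
  · intro hmax S hS hsub
    have hc : (0:ℝ) < S.card := by exact_mod_cast Finset.card_pos.mpr hS
    have h1 := hmax S hS hsub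
    have hpos : (0:ℝ) < (S.card : ℝ) + S₀.card := by linarith
    rw [lt_div_iff₀ hpos] at h1
    rw [lt_div_iff₀ hc, hfS₀]
    nlinarith
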